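/- arXiv:1610.00507 — 7 statements merged into one kernel-verified Lean document; each statement's English description precedes it below -/
import Mathlib

section
/- Let W ∈ C¹(ℝ) with W'(x) → −∞ as x → −∞ and W'(x) → +∞ as x → +∞, and let δ : ℝ × ℝ → [0,∞) be continuous with lim_{v→u} δ(u,v)/|v−u| = 0 for every u. Then the function u ↦ W'_{ir,δ}(u) := inf_{z>u} (W(z) − W(u) + δ(u,z))/(z−u) is continuous on ℝ. -/
open Filter Set

section Stmt4Aux

variable {W W' : ℝ → ℝ} {δ : ℝ × ℝ → ℝ}

private lemma stmt4_lb_on_ray (hW'c : Continuous W') (hWtop : Tendsto W' atTop atTop) (a : ℝ) :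
    ∃ m, ∀ x, a ≤ x → m ≤ W' x := by
  obtain ⟨R, hR⟩ := eventually_atTop.1 (hWtop.eventually_ge_atTop 0)
  obtain ⟨x₀, -, hx₀⟩ := isCompact_Icc.exists_isMinOn (Set.nonempty_Icc.2 (le_max_left a R))
    hW'c.continuousOn
  refine ⟨min (W' x₀) 0, fun x hx => ?_⟩
  rcases le_or_gt x (max a R) with h | h
  · exact (min_le_left _ _).trans (hx₀ ⟨hx, h⟩)
  · exact (min_le_right _ _).trans (hR x ((le_max_right a R).trans h.le))

private lemma stmt4_slope_lb (hW : ∀ u, HasDerivAt W (W' u) u) {m a u z : ℝ}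
    (hm : ∀ x, a ≤ x → m ≤ W' x) (hau : a ≤ u) (huz : u < z) :
    m ≤ (W z - W u) / (z - u) := by
  obtain ⟨c, hc, hceq⟩ := exists_hasDerivAt_eq_slope W W' huz
    (fun x _ => (hW x).continuousAt.continuousWithinAt) (fun x _ => hW x)
  rw [← hceq]
  exact hm c (hau.trans hc.1.le)

private lemma stmt4_q_ge_slope (hδ0 : ∀ p, 0 ≤ δ p) {u z : ℝ} (huz : u < z) :
    (W z - W u) / (z - u) ≤ (W z - W u + δ (u, z)) / (z - u) := by
  have h : (0:ℝ) < z - u := by linarith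
  have h2 := div_nonneg (hδ0 (u, z)) h.le
  rw [add_div]
  linarith

private lemma stmt4_growth (hW : ∀ u, HasDerivAt W (W' u) u) (hW'c : Continuous W')
    (hWtop : Tendsto W' atTop atTop) (u₀ L : ℝ) :
    ∃ Z, ∀ u z, |u - u₀| ≤ 1 → Z ≤ z → u < z → L ≤ (W z - W u) / (z - u) := by
  obtain ⟨m, hm⟩ := stmt4_lb_on_ray hW'c hWtop (u₀ - 1)
  obtain ⟨R₀, hR₀⟩ := eventually_atTop.1 (hWtop.eventually_ge_atTop (|L| + 1))
  set R := max R₀ (u₀ + 2) with hRdef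
  refine ⟨R + (|m| + |L|) * (R - u₀ + 1) + 1, fun u z hu hz huz => ?_⟩
  have habs := abs_le.1 hu
  have hu1 : u₀ - 1 ≤ u := by linarith [habs.1]
  have hu2 : u ≤ u₀ + 1 := by linarith [habs.2]
  have hRb : u₀ + 2 ≤ R := le_max_right _ _
  have hRu : u < R := by linarith
  have hprod : 0 ≤ (|m| + |L|) * (R - u₀ + 1) :=
    mul_nonneg (by positivity) (by linarith)
  have hRz : R < z := by linarith
  obtain ⟨c₁, hc₁, e₁⟩ := exists_hasDerivAt_eq_slope W W' hRu
    (fun x _ => (hW x).continuousAt.continuousWithinAt) (fun x _ => hW x)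
  obtain ⟨c₂, hc₂, e₂⟩ := exists_hasDerivAt_eq_slope W W' hRz
    (fun x _ => (hW x).continuousAt.continuousWithinAt) (fun x _ => hW x)
  have hpos1 : (0:ℝ) < R - u := by linarith
  have hpos2 : (0:ℝ) < z - R := by linarith
  have h₁ : m * (R - u) ≤ W R - W u := by
    have hmc : m ≤ W' c₁ := hm c₁ (by linarith [hc₁.1])
    have hWRu : W R - W u = W' c₁ * (R - u) := by
      field_simp at e₁; linarith [e₁]
    rw [hWRu]
    exact mul_le_mul_of_nonneg_right hmc hpos1.le
  have h₂ : (|L| + 1) * (z - R) ≤ W z - W R := by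
    have hmc : |L| + 1 ≤ W' c₂ := hR₀ c₂ (by linarith [hc₂.1, le_max_left R₀ (u₀ + 2)])
    have hWzR : W z - W R = W' c₂ * (z - R) := by
      field_simp at e₂; linarith [e₂]
    rw [hWzR]
    exact mul_le_mul_of_nonneg_right hmc hpos2.le
  rw [le_div_iff₀ (show (0:ℝ) < z - u by linarith)]
  have hL1 : L ≤ |L| := le_abs_self L
  have hL2 : -|L| ≤ L := neg_abs_le L
  have hm1 : -|m| ≤ m := neg_abs_le m
  have hzR : (|m| + |L|) * (R - u₀ + 1) + 1 ≤ z - R := by linarith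
  have hRub : R - u ≤ R - u₀ + 1 := by linarith
  have key : -((|m| + |L|) * (R - u₀ + 1)) ≤ (m - L) * (R - u) := by
    rcases le_or_gt 0 (m - L) with h | h
    · nlinarith
    · have : (m - L) * (R - u₀ + 1) ≤ (m - L) * (R - u) := by nlinarith
      nlinarith
  nlinarith [mul_le_mul_of_nonneg_right hL1 hpos2.le]

end Stmt4Aux

/-- under coercivity of W', the corrected inf-right global slope
u ↦ W'_{ir,δ}(u) = inf_{z>u} (W(z) − W(u) + δ(u,z))/(z−u) is continuous on ℝ. -/
theorem stmt4 (W W' : ℝ → ℝ) (hW : ∀ u, HasDerivAt W (W' u) u) (hW'c : Continuous W')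
    (hWbot : Tendsto W' atBot atBot) (hWtop : Tendsto W' atTop atTop)
    (δ : ℝ × ℝ → ℝ) (hδc : Continuous δ) (hδ0 : ∀ p, 0 ≤ δ p)
    (hδlim : ∀ u, Tendsto (fun v => δ (u, v) / |v - u|) (nhdsWithin u {u}ᶜ) (nhds 0)) :
    Continuous (fun u : ℝ =>
      sInf {q : ℝ | ∃ z, u < z ∧ q = (W z - W u + δ (u, z)) / (z - u)}) := by
  have hWc : Continuous W := continuous_iff_continuousAt.2 fun x => (hW x).continuousAt
  set Su : ℝ → Set ℝ :=
    fun u => {q : ℝ | ∃ z, u < z ∧ q = (W z - W u + δ (u, z)) / (z - u)} with hSu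
  have hSne : ∀ u, (Su u).Nonempty := fun u => ⟨_, u + 1, by linarith, rfl⟩
  have hSlb : ∀ {a u : ℝ} (m : ℝ), (∀ x, a ≤ x → m ≤ W' x) → a ≤ u → ∀ q ∈ Su u, m ≤ q := by
    rintro a u m hm hau q ⟨z, hz, rfl⟩
    exact (stmt4_slope_lb hW hm hau hz).trans (stmt4_q_ge_slope hδ0 hz)
  have hSbdd : ∀ {a u : ℝ} (m : ℝ), (∀ x, a ≤ x → m ≤ W' x) → a ≤ u → BddBelow (Su u) :=
    fun m hm hau => ⟨m, fun q hq => hSlb m hm hau q hq⟩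
  -- the inf is at most W' u
  have hFle : ∀ u, sInf (Su u) ≤ W' u := by
    intro u
    obtain ⟨m, hm⟩ := stmt4_lb_on_ray hW'c hWtop u
    refine le_of_forall_pos_le_add fun ε hε => ?_
    have h1 : Tendsto (fun z => (W z - W u) / (z - u)) (nhdsWithin u (Ioi u)) (nhds (W' u)) := by
      have h0 := (hasDerivAt_iff_tendsto_slope.1 (hW u)).mono_left
        (nhdsWithin_mono u (fun z (hz : z ∈ Ioi u) => ne_of_gt hz))
      exact h0.congr (fun z => by rw [slope_def_field])
    have h2 : Tendsto (fun z => δ (u, z) / (z - u)) (nhdsWithin u (Ioi u)) (nhds 0) := by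
      have h3 := (hδlim u).mono_left
        (nhdsWithin_mono u (fun z (hz : z ∈ Ioi u) => ne_of_gt hz))
      refine Tendsto.congr' ?_ h3
      filter_upwards [self_mem_nhdsWithin] with z hz
      rw [abs_of_pos (sub_pos.2 hz)]
    have h3 := h1.add h2
    rw [add_zero] at h3
    have h4 : ∀ᶠ z in nhdsWithin u (Ioi u),
        (W z - W u + δ (u, z)) / (z - u) < W' u + ε := by
      filter_upwards [h3.eventually_lt_const (lt_add_of_pos_right _ hε)] with z hz
      rw [add_div]; exact hz
    obtain ⟨z, hz1, hz2⟩ := (h4.and self_mem_nhdsWithin).exists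
    exact (csInf_le (hSbdd m hm le_rfl) ⟨z, hz2, rfl⟩).trans hz1.le
  rw [continuous_iff_continuousAt]
  intro u₀
  have key : Tendsto (fun u => sInf (Su u)) (nhds u₀) (nhds (sInf (Su u₀))) := by
    rw [Metric.tendsto_nhds]
    intro ε hε
    set L := sInf (Su u₀) with hL
    obtain ⟨m₀, hm₀⟩ := stmt4_lb_on_ray hW'c hWtop (u₀ - 1)
    have hBd : BddBelow (Su u₀) := hSbdd m₀ hm₀ (by linarith)
    -- upper bound
    have upper : ∀ᶠ u in nhds u₀, sInf (Su u) < L + ε := by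
      obtain ⟨q, ⟨z₀, hz₀, hqeq⟩, hq⟩ :=
        exists_lt_of_csInf_lt (hSne u₀) (show L < L + ε/2 by linarith)
      subst hqeq
      have hc : ContinuousAt (fun u => (W z₀ - W u + δ (u, z₀)) / (z₀ - u)) u₀ := by
        apply ContinuousAt.div
        · exact ((continuous_const.sub hWc).add
            (hδc.comp (continuous_id.prodMk continuous_const))).continuousAt
        · exact (continuous_const.sub continuous_id).continuousAt
        · exact sub_ne_zero.2 (ne_of_gt hz₀)
      have h5 : ∀ᶠ u in nhds u₀, (W z₀ - W u + δ (u, z₀)) / (z₀ - u) < L + ε :=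
        Tendsto.eventually_lt_const (show (W z₀ - W u₀ + δ (u₀, z₀)) / (z₀ - u₀) < L + ε
          by linarith) hc
      filter_upwards [h5, eventually_lt_nhds hz₀, eventually_abs_sub_lt u₀ one_pos]
        with u h5u huz hu1
      have hbdd : BddBelow (Su u) := hSbdd m₀ hm₀ (by linarith [abs_le.1 hu1.le])
      exact lt_of_le_of_lt (csInf_le hbdd ⟨z₀, huz, rfl⟩) h5u
    -- lower bound
    have lower : ∀ᶠ u in nhds u₀, L - ε < sInf (Su u) := by
      obtain ⟨η₀, hη₀, hW'near⟩ := Metric.continuousAt_iff.1 hW'c.continuousAt (ε/2)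
        (by linarith)
      set η := η₀ / 4 with hηdef
      have hηpos : 0 < η := by positivity
      obtain ⟨Z, hZ⟩ := stmt4_growth hW hW'c hWtop u₀ L
      set Z' := max Z (u₀ + η + 1) with hZ'def
      set K := Icc (u₀ - η/2) (u₀ + η/2) ×ˢ Icc (u₀ + η) Z' with hKdef
      have hKc : IsCompact K := isCompact_Icc.prod isCompact_Icc
      have hGc : ContinuousOn (fun p : ℝ × ℝ => (W p.2 - W p.1 + δ p) / (p.2 - p.1)) K := by
        apply ContinuousOn.div
        · exact (((hWc.comp continuous_snd).sub (hWc.comp continuous_fst)).add hδc).continuousOn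
        · exact (continuous_snd.sub continuous_fst).continuousOn
        · rintro ⟨u, z⟩ ⟨hu, hz⟩
          have h1 : u ≤ u₀ + η/2 := hu.2
          have h2 : u₀ + η ≤ z := hz.1
          have : (0:ℝ) < z - u := by linarith
          exact this.ne'
      obtain ⟨η₂, hη₂pos, hUC2⟩ :=
        Metric.uniformContinuousOn_iff.1 (hKc.uniformContinuousOn_of_continuous hGc) (ε/2)
          (by linarith)
      have hrpos : 0 < min (min (η/2) η₂) 1 := by positivity
      filter_upwards [eventually_abs_sub_lt u₀ hrpos] with u hu
      have hu1 : |u - u₀| < η/2 := lt_of_lt_of_le hu ((min_le_left _ _).trans (min_le_left _ _))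
      have hu2 : |u - u₀| < η₂ := lt_of_lt_of_le hu ((min_le_left _ _).trans (min_le_right _ _))
      have hu3 : |u - u₀| ≤ 1 := (lt_of_lt_of_le hu (min_le_right _ _)).le
      have habs1 := abs_lt.1 hu1
      have habs3 := abs_le.1 hu3
      have main : L - ε/2 ≤ sInf (Su u) := by
        refine le_csInf (hSne u) ?_
        rintro q ⟨z, hz, rfl⟩
        rcases le_or_gt (z - u) (2*η) with hA | hB
        · -- z close to u : use MVT and continuity of W'
          obtain ⟨c, hc, hceq⟩ := exists_hasDerivAt_eq_slope W W' hz
            (fun x _ => (hW x).continuousAt.continuousWithinAt) (fun x _ => hW x)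
          have hcd : dist c u₀ < η₀ := by
            rw [Real.dist_eq, abs_lt]
            constructor
            · have := hc.1; linarith
            · have := hc.2; linarith
          have hWc' := hW'near hcd
          rw [Real.dist_eq] at hWc'
          have habsW := abs_lt.1 hWc'
          have hge : (W z - W u) / (z - u) ≤ (W z - W u + δ (u, z)) / (z - u) :=
            stmt4_q_ge_slope hδ0 hz
          have hLW : L ≤ W' u₀ := hFle u₀
          rw [← hceq] at hge
          linarith [habsW.1]
        · -- z far from u
          have hz₀ : u₀ + η < z := by linarith
          rcases le_or_gt z Z' with hZ1 | hZ1
          · -- bounded region : uniform continuity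
            have hmem1 : (u, z) ∈ K := by
              refine ⟨⟨?_, ?_⟩, ⟨?_, ?_⟩⟩ <;> simp only <;> linarith
            have hmem2 : (u₀, z) ∈ K := by
              refine ⟨⟨?_, ?_⟩, ⟨?_, ?_⟩⟩ <;> simp only <;> linarith
            have hd : dist (u, z) (u₀, z) < η₂ := by
              rw [Prod.dist_eq]
              simp only [Real.dist_eq, sub_self, abs_zero]
              rw [sup_eq_left.2 (abs_nonneg _)]
              exact hu2
            have hUCr := hUC2 _ hmem1 _ hmem2 hd
            simp only [Real.dist_eq] at hUCr
            have habsU := abs_lt.1 hUCr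
            have hL2 : L ≤ (W z - W u₀ + δ (u₀, z)) / (z - u₀) :=
              csInf_le hBd ⟨z, by linarith, rfl⟩
            have := habsU.1
            linarith
          · -- superlinear growth region
            have hZz : Z ≤ z := le_of_lt (lt_of_le_of_lt (le_max_left _ _) hZ1)
            have hgrow := hZ u z hu3 hZz hz
            have hge := stmt4_q_ge_slope (W := W) hδ0 hz
            linarith
      linarith
    filter_upwards [upper, lower] with u h1 h2
    rw [Real.dist_eq, abs_sub_lt_iff]
    exact ⟨by linarith, by linarith⟩
  exact key
end

section
/- Let W ∈ C¹(ℝ) with W'(x) → ±∞ as x → ±∞, and δ : ℝ × ℝ → [0,∞) continuous satisfying lim_{v→u} δ(u,v)/|v−u| = 0 and the strict reverse triangle inequality δ(u₀,u₁) > δ(u₀,v) + δ(v,u₁) for all u₀ < v < u₁. Let I ⊆ ℝ be an open interval such that W'_{ir,δ}(v) < W'(v) for every v ∈ I. Then W'_{ir,δ} is strictly decreasing on I. -/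
open Filter Set

/-- if W'_{ir,δ} < W' on an open interval I, then W'_{ir,δ} is strictly
decreasing on I. -/
theorem stmt8 (W W' : ℝ → ℝ) (hW : ∀ u, HasDerivAt W (W' u) u) (hW'c : Continuous W')
    (hWbot : Tendsto W' atBot atBot) (hWtop : Tendsto W' atTop atTop)
    (δ : ℝ × ℝ → ℝ) (hδc : Continuous δ) (hδ0 : ∀ p, 0 ≤ δ p)
    (hδlim : ∀ u, Tendsto (fun v => δ (u, v) / |v - u|) (nhdsWithin u {u}ᶜ) (nhds 0))
    (hδtri : ∀ u₀ v u₁ : ℝ, u₀ < v → v < u₁ → δ (u₀, v) + δ (v, u₁) < δ (u₀, u₁))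
    (Wird : ℝ → ℝ)
    (hWird : ∀ u, Wird u = sInf {q : ℝ | ∃ z, u < z ∧ q = (W z - W u + δ (u, z)) / (z - u)})
    (a b : ℝ) (hlt : ∀ v ∈ Ioo a b, Wird v < W' v) :
    StrictAntiOn Wird (Ioo a b) := by
  have hWc : Continuous W := continuous_iff_continuousAt.mpr fun x => (hW x).continuousAt
  -- mean value type inequality
  have key : ∀ (c x y : ℝ), x ≤ y → (∀ t ∈ Icc x y, c ≤ W' t) →
      c * (y - x) ≤ W y - W x := by
    intro c x y hxy h
    have hmono : MonotoneOn (fun t => W t - c * t) (Icc x y) := by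
      apply monotoneOn_of_deriv_nonneg (convex_Icc x y)
      · exact (hWc.sub (continuous_const.mul continuous_id)).continuousOn
      · intro t _
        exact ((hW t).sub (by simpa using (hasDerivAt_id t).const_mul c)).differentiableAt.differentiableWithinAt
      · intro t ht
        rw [interior_Icc] at ht
        have hd : HasDerivAt (fun t => W t - c * t) (W' t - c) t :=
          (hW t).sub (by simpa using (hasDerivAt_id t).const_mul c)
        rw [hd.deriv]
        have := h t ⟨le_of_lt ht.1, le_of_lt ht.2⟩
        linarith
    have h2 := hmono ⟨le_refl x, hxy⟩ ⟨hxy, le_refl y⟩ hxy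
    simp only at h2
    nlinarith [h2]
  -- lower bound of W' on half lines
  have hlow : ∀ x : ℝ, ∃ m, ∀ t, x ≤ t → m ≤ W' t := by
    intro x
    obtain ⟨R, hR⟩ := eventually_atTop.mp (hWtop.eventually_ge_atTop (0:ℝ))
    obtain ⟨t₀, ht₀K, ht₀⟩ := isCompact_Icc.exists_isMinOn
      (⟨x, le_refl x, le_max_left x R⟩ : (Icc x (max x R)).Nonempty) hW'c.continuousOn
    refine ⟨min (W' t₀) 0, fun t hxt => ?_⟩
    rcases le_or_gt t (max x R) with h | h
    · exact le_trans (min_le_left _ _) (isMinOn_iff.mp ht₀ t ⟨hxt, h⟩)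
    · exact le_trans (min_le_right _ _) (hR t (le_trans (le_max_right x R) (le_of_lt h)))
  -- sets are nonempty and bounded below
  have hS : ∀ p : ℝ, {q : ℝ | ∃ z, p < z ∧ q = (W z - W p + δ (p, z)) / (z - p)}.Nonempty :=
    fun p => ⟨_, p + 1, by linarith, rfl⟩
  have hbdd : ∀ p : ℝ, BddBelow {q : ℝ | ∃ z, p < z ∧ q = (W z - W p + δ (p, z)) / (z - p)} := by
    intro p
    obtain ⟨m, hm⟩ := hlow p
    refine ⟨min m 0, ?_⟩
    rintro q ⟨z, hz, rfl⟩
    have hk : m * (z - p) ≤ W z - W p := key m p z (le_of_lt hz) (fun t ht => hm t ht.1)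
    have hzp : (0:ℝ) < z - p := by linarith
    rw [le_div_iff₀ hzp]
    nlinarith [hδ0 (p, z), min_le_left m 0, min_le_right m (0:ℝ)]
  have hWird_le : ∀ p z, p < z → Wird p ≤ (W z - W p + δ (p, z)) / (z - p) := by
    intro p z h
    rw [hWird p]
    exact csInf_le (hbdd p) ⟨z, h, rfl⟩
  -- from continuity of W', strict bounds hold on a closed interval
  have hnear : ∀ (x c : ℝ), c < W' x → ∃ η > 0, ∀ t ∈ Icc (x - η) (x + η), c ≤ W' t := by
    intro x c hc
    have h1 : {t : ℝ | c < W' t} ∈ nhds x := (isOpen_lt continuous_const hW'c).mem_nhds hc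
    obtain ⟨ε, hε, hball⟩ := Metric.mem_nhds_iff.mp h1
    refine ⟨ε/2, by linarith, fun t ht => ?_⟩
    have habs : |t - x| ≤ ε/2 := abs_le.mpr ⟨by linarith [ht.1], by linarith [ht.2]⟩
    have : |t - x| < ε := by linarith
    exact le_of_lt (hball (by rwa [Metric.mem_ball, Real.dist_eq]))
  -- Lemma A: local strict decrease to the right
  have lemA : ∀ x, a < x → x < b → ∃ ρ > 0, ∀ y, x < y → y < x + ρ → Wird y < Wird x := by
    intro x hax hxb
    have hx : Wird x < W' x := hlt x ⟨hax, hxb⟩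
    set γ := (W' x - Wird x) / 2 with hγdef
    have hγ : 0 < γ := by simp only [hγdef]; linarith
    obtain ⟨η, hηpos, hη⟩ := hnear x (Wird x + γ) (by simp only [hγdef]; linarith)
    obtain ⟨m, hm⟩ := hlow x
    obtain ⟨R₁, hR₁⟩ := eventually_atTop.mp (hWtop.eventually_ge_atTop (Wird x + γ + 1))
    set R₁' := max R₁ x with hR₁'def
    have hR₁'x : x ≤ R₁' := le_max_right _ _
    have hR₁'' : ∀ t, R₁' ≤ t → Wird x + γ + 1 ≤ W' t :=
      fun t ht => hR₁ t (le_trans (le_max_left _ _) ht)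
    set R := max (max ((Wird x + γ + 1) * R₁' - (Wird x + γ + 1) * x - m * R₁' + m * x + x) R₁')
      (x + η) with hRdef
    have hRx : x + η ≤ R := le_max_right _ _
    have hxR : x < R := by linarith
    -- coercivity: far away the quotient is large
    have hcoer : ∀ z, R ≤ z → Wird x + γ ≤ (W z - W x + δ (x, z)) / (z - x) := by
      intro z hz
      have hz1 : (Wird x + γ + 1) * R₁' - (Wird x + γ + 1) * x - m * R₁' + m * x + x ≤ z :=
        le_trans (le_trans (le_max_left _ _) (le_max_left _ _)) hz
      have hz2 : R₁' ≤ z := le_trans (le_trans (le_max_right _ _) (le_max_left _ _)) hz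
      have hz3 : x < z := lt_of_lt_of_le hxR hz
      have h2 : (Wird x + γ + 1) * (z - R₁') ≤ W z - W R₁' :=
        key _ R₁' z hz2 (fun t ht => hR₁'' t ht.1)
      have h3 : m * (R₁' - x) ≤ W R₁' - W x := key m x R₁' hR₁'x (fun t ht => hm t ht.1)
      rw [le_div_iff₀ (by linarith)]
      nlinarith [hδ0 (x, z)]
    -- near x the quotient is at least Wird x + γ
    have hnearQ : ∀ w, x < w → w ≤ x + η → Wird x + γ ≤ (W w - W x + δ (x, w)) / (w - x) := by
      intro w h1 h2
      have hk : (Wird x + γ) * (w - x) ≤ W w - W x :=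
        key _ x w (le_of_lt h1) (fun t ht => hη t ⟨by linarith [ht.1], by linarith [ht.2]⟩)
      rw [le_div_iff₀ (by linarith)]
      linarith [hδ0 (x, w)]
    -- minimizer on the compact middle region
    have hKne : (Icc (x + η) R).Nonempty := ⟨x + η, le_refl _, hRx⟩
    have hδx : Continuous (fun z : ℝ => δ (x, z)) :=
      hδc.comp (continuous_const.prodMk continuous_id)
    have hQc : ContinuousOn (fun z => (W z - W x + δ (x, z)) / (z - x)) (Icc (x + η) R) := by
      apply ContinuousOn.div
      · exact ((hWc.sub continuous_const).add hδx).continuousOn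
      · exact (continuous_id.sub continuous_const).continuousOn
      · intro z hz
        have : (0:ℝ) < z - x := by linarith [hz.1]
        exact ne_of_gt this
    obtain ⟨z, hzK, hzmin'⟩ := isCompact_Icc.exists_isMinOn hKne hQc
    have hzmin := isMinOn_iff.mp hzmin'
    have hxz : x < z := by linarith [hzK.1]
    -- an approximate minimizer lies in the compact region
    have h0 : sInf {q : ℝ | ∃ z, x < z ∧ q = (W z - W x + δ (x, z)) / (z - x)} < Wird x + γ := by
      rw [← hWird]; linarith
    obtain ⟨q, ⟨w₀, hxw₀, rfl⟩, hq⟩ := exists_lt_of_csInf_lt (hS x) h0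
    have hw₀K : w₀ ∈ Icc (x + η) R := by
      constructor
      · by_contra h
        push_neg at h
        exact absurd hq (not_lt.mpr (hnearQ w₀ hxw₀ (le_of_lt h)))
      · by_contra h
        push_neg at h
        exact absurd hq (not_lt.mpr (hcoer w₀ (le_of_lt h)))
    have hmin1 : (W z - W x + δ (x, z)) / (z - x) ≤ (W w₀ - W x + δ (x, w₀)) / (w₀ - x) :=
      hzmin w₀ hw₀K
    -- the minimum value is exactly Wird x
    have hzval : (W z - W x + δ (x, z)) / (z - x) = Wird x := by
      apply le_antisymm
      · rw [hWird x]
        apply le_csInf (hS x)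
        rintro q ⟨w, hw, rfl⟩
        by_cases hwK : w ∈ Icc (x + η) R
        · exact hzmin w hwK
        · simp only [mem_Icc, not_and_or, not_le] at hwK
          rcases hwK with h | h
          · linarith [hnearQ w hw (le_of_lt h)]
          · linarith [hcoer w (le_of_lt h)]
      · exact hWird_le x z hxz
    have hδeq : W z - W x + δ (x, z) = Wird x * (z - x) := by
      rw [div_eq_iff (ne_of_gt (by linarith : (0:ℝ) < z - x))] at hzval
      exact hzval
    refine ⟨η, hηpos, ?_⟩
    intro y hxy hyη
    have hyz : y < z := lt_of_lt_of_le hyη hzK.1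
    have h2 : Wird y ≤ (W z - W y + δ (y, z)) / (z - y) := hWird_le y z hyz
    have htri := hδtri x y z hxy hyz
    have hWy : (Wird x + γ) * (y - x) ≤ W y - W x :=
      key _ x y (le_of_lt hxy) (fun t ht => hη t ⟨by linarith [ht.1], by linarith [ht.2]⟩)
    have hzy : (0:ℝ) < z - y := by linarith
    have hpos : 0 < γ * (y - x) := mul_pos hγ (by linarith)
    have hfin : (W z - W y + δ (y, z)) / (z - y) < Wird x := by
      rw [div_lt_iff₀ hzy]
      nlinarith [hδ0 (x, y), htri, hδeq, hWy, hpos]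
    linarith
  -- Lemma B: left lower semicontinuity type bound
  have lemB : ∀ s, a < s → s < b → ∃ η > 0, ∀ t, s - η ≤ t → t < s → Wird s ≤ Wird t := by
    intro s has hsb
    have hs : Wird s < W' s := hlt s ⟨has, hsb⟩
    obtain ⟨η, hηpos, hη⟩ := hnear s (Wird s) hs
    refine ⟨η, hηpos, ?_⟩
    intro t hts hst
    by_contra hcon
    push_neg at hcon
    set ε := (Wird s - Wird t) / 2 with hεdef
    have hε : 0 < ε := by simp only [hεdef]; linarith
    have h0 : sInf {q : ℝ | ∃ z, t < z ∧ q = (W z - W t + δ (t, z)) / (z - t)} < Wird t + ε := by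
      rw [← hWird]; linarith
    obtain ⟨q, ⟨z, htz, rfl⟩, hq⟩ := exists_lt_of_csInf_lt (hS t) h0
    have hmain : Wird s ≤ (W z - W t + δ (t, z)) / (z - t) := by
      rcases le_or_gt z s with hzs | hsz
      · have hm : Wird s * (z - t) ≤ W z - W t :=
          key _ t z (le_of_lt htz) (fun r hr => hη r ⟨by linarith [hr.1], by linarith [hr.2]⟩)
        rw [le_div_iff₀ (by linarith)]
        linarith [hδ0 (t, z)]
      · have htri := hδtri t s z hst hsz
        have hm : Wird s * (s - t) ≤ W s - W t :=
          key _ t s (le_of_lt hst) (fun r hr => hη r ⟨by linarith [hr.1], by linarith [hr.2]⟩)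
        have hQs : Wird s ≤ (W z - W s + δ (s, z)) / (z - s) := hWird_le s z hsz
        have hQs' : Wird s * (z - s) ≤ W z - W s + δ (s, z) :=
          (le_div_iff₀ (by linarith)).mp hQs
        rw [le_div_iff₀ (by linarith : (0:ℝ) < z - t)]
        nlinarith [hδ0 (t, s), htri, hm, hQs']
    simp only [hεdef] at hq
    linarith
  -- nonstrict antitonicity by a sup-chaining argument
  have anti : ∀ p q, a < p → p ≤ q → q < b → Wird q ≤ Wird p := by
    intro p q hap hpq hqb
    set T := {x : ℝ | x ∈ Icc p q ∧ ∀ t ∈ Icc p x, Wird t ≤ Wird p} with hTdef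
    have hpT : p ∈ T := by
      refine ⟨⟨le_refl p, hpq⟩, fun t ht => ?_⟩
      have : t = p := le_antisymm ht.2 ht.1
      rw [this]
    have hTne : T.Nonempty := ⟨p, hpT⟩
    have hTbdd : BddAbove T := ⟨q, fun x hx => hx.1.2⟩
    set s := sSup T with hsdef
    have hps : p ≤ s := le_csSup hTbdd hpT
    have hsq : s ≤ q := csSup_le hTne (fun x hx => hx.1.2)
    have hall : ∀ t, p ≤ t → t < s → Wird t ≤ Wird p := by
      intro t hpt hts
      obtain ⟨x, hxT, htx⟩ := exists_lt_of_lt_csSup hTne hts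
      exact hxT.2 t ⟨hpt, le_of_lt htx⟩
    have hsT : Wird s ≤ Wird p := by
      rcases eq_or_lt_of_le hps with h | h
      · rw [← h]
      · obtain ⟨η, hηpos, hB⟩ := lemB s (lt_of_lt_of_le hap hps) (lt_of_le_of_lt hsq hqb)
        have h1 : max p (s - η/2) < s := max_lt h (by linarith)
        have h2 : s - η ≤ max p (s - η/2) := le_trans (by linarith) (le_max_right _ _)
        exact le_trans (hB _ h2 h1) (hall _ (le_max_left _ _) h1)
    have hsq' : s = q := by
      by_contra hne
      have hsq2 : s < q := lt_of_le_of_ne hsq hne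
      obtain ⟨ρ, hρ, hA⟩ := lemA s (lt_of_lt_of_le hap hps) (lt_trans hsq2 hqb)
      have hx1 : s < min (s + ρ/2) q := lt_min (by linarith) hsq2
      have hxT : min (s + ρ/2) q ∈ T := by
        refine ⟨⟨le_trans hps (le_of_lt hx1), min_le_right _ _⟩, ?_⟩
        intro t ht
        rcases lt_or_ge t s with h' | h'
        · exact hall t ht.1 h'
        · rcases eq_or_lt_of_le h' with h'' | h''
          · rw [← h'']; exact hsT
          · have hty : t < s + ρ := by
              have := le_trans ht.2 (min_le_left (s + ρ/2) q)
              linarith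
            linarith [hA t h'' hty]
      exact absurd (le_csSup hTbdd hxT) (not_le.mpr hx1)
    rw [← hsq']
    exact hsT
  -- conclude strict antitonicity
  intro u hu v hv huv
  obtain ⟨ρ, hρ, hA⟩ := lemA u hu.1 hu.2
  have hw1 : u < min (u + ρ/2) ((u + v)/2) := lt_min (by linarith) (by linarith)
  have hw2 : min (u + ρ/2) ((u + v)/2) < v :=
    lt_of_le_of_lt (min_le_right _ _) (by linarith)
  have hw3 : Wird (min (u + ρ/2) ((u + v)/2)) < Wird u := by
    apply hA _ hw1
    have := min_le_left (u + ρ/2) ((u + v)/2)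
    linarith
  have hanti : Wird v ≤ Wird (min (u + ρ/2) ((u + v)/2)) :=
    anti _ v (lt_trans hu.1 hw1) (le_of_lt hw2) hv.2
  linarith
end

section
/- Let E ⊂ ℝ be compact with inf E < sup E, let L(E) be the set of limit points of E, let f : E → ℝ be lower semicontinuous and left-continuous, and let g ∈ C(E) be strictly increasing. Assume: (i) for every connected component I = (I⁻, I⁺) of (inf E, sup E) \ E one has (f(I⁺) − f(I⁻))/(g(I⁺) − g(I⁻)) ≥ 1; (ii) for every t ∈ L(E) which is an accumulation point of L(E) ∩ (−∞, t), limsup_{s↑t, s∈L(E)} (f(t) − f(s))/(g(t) − g(s)) ≥ 1. Then s ↦ f(s) − g(s) is nondecreasing on E; in particular f(sup E) − f(inf E) ≥ g(sup E) − g(inf E). -/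
open Filter Set Topology

lemma accPt_of_neBot' {E s : Set ℝ} {x : ℝ} (hs : s ⊆ E) (hx : x ∉ s)
    (h : (𝓝[s] x).NeBot) : AccPt x (𝓟 E) := by
  have hsub : s ⊆ {x}ᶜ ∩ E := fun y hy => ⟨fun he => hx (by simpa using he ▸ hy), hs hy⟩
  have hle : 𝓝[s] x ≤ 𝓝[{x}ᶜ ∩ E] x := nhdsWithin_mono x hsub
  have h2 : (𝓝[{x}ᶜ ∩ E] x).NeBot := h.mono hle
  have heq : 𝓝[{x}ᶜ ∩ E] x = 𝓝[≠] x ⊓ 𝓟 E := by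
    rw [nhdsWithin, nhdsWithin, ← inf_principal, inf_assoc]
  exact ⟨by rw [← heq]; exact h2.ne⟩

lemma exists_next' {E : Set ℝ} (hE : IsClosed E) {m c : ℝ} (hm : m ∈ E) (hc : c ∈ E)
    (hmc : m < c) (hacc : ¬ AccPt m (𝓟 E)) :
    ∃ w ∈ E, m < w ∧ w ≤ c ∧ Ioo m w ∩ E = ∅ := by
  have hbot : 𝓝[≠] m ⊓ 𝓟 E = ⊥ := not_neBot.mp hacc
  have hmem : Eᶜ ∈ 𝓝[≠] m := inf_principal_eq_bot.mp hbot
  obtain ⟨r, hr, hball⟩ := Metric.mem_nhdsWithin_iff.mp hmem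
  set S := E ∩ Ioc m c with hS
  have hSne : S.Nonempty := ⟨c, hc, hmc, le_refl c⟩
  have hSbdd : BddBelow S := ⟨m, fun u hu => hu.2.1.le⟩
  have hlow : ∀ u ∈ S, m + r ≤ u := by
    intro u hu
    by_contra hur
    push_neg at hur
    have hub : u ∈ Metric.ball m r ∩ {m}ᶜ := by
      refine ⟨?_, ?_⟩
      · rw [Metric.mem_ball, Real.dist_eq, abs_of_pos (sub_pos.mpr hu.2.1)]; linarith
      · simp only [mem_compl_iff, mem_singleton_iff]
        exact ne_of_gt hu.2.1
    exact hball hub hu.1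
  have hwcl : sInf S ∈ closure S := csInf_mem_closure hSne hSbdd
  have hwE : sInf S ∈ E := by
    have hcl : closure S ⊆ E := by
      rw [← hE.closure_eq]; exact closure_mono inter_subset_left
    exact hcl hwcl
  refine ⟨sInf S, hwE, ?_, csInf_le hSbdd ⟨hc, hmc, le_refl c⟩, ?_⟩
  · have : m + r ≤ sInf S := le_csInf hSne hlow
    linarith
  · rw [eq_empty_iff_forall_notMem]
    rintro u ⟨⟨hmu, huw⟩, huE⟩
    have huS : u ∈ S := ⟨huE, hmu, huw.le.trans (csInf_le hSbdd ⟨hc, hmc, le_refl c⟩)⟩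
    exact absurd (csInf_le hSbdd huS) (not_le.mpr huw)

lemma chain' {E : Set ℝ} (hE : IsClosed E) {f g : ℝ → ℝ}
    (hfl : ∀ t ∈ E, Tendsto f (𝓝[E ∩ Iio t] t) (𝓝 (f t)))
    (hgc : ContinuousOn g E)
    (hi : ∀ p ∈ E, ∀ q ∈ E, p < q → Ioo p q ∩ E = ∅ → g q - g p ≤ f q - f p)
    {t c : ℝ} (ht : t ∈ E) (hc : c ∈ E) (htc : t < c)
    (hgap : ∀ x ∈ Ico t c, ¬ AccPt x (𝓟 E)) :
    g c - g t ≤ f c - f t := by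
  set T : Set ℝ := {u | (u ∈ E ∧ t ≤ u ∧ u ≤ c) ∧ g u - g t ≤ f u - f t} with hT
  have htT : t ∈ T := ⟨⟨ht, le_refl t, htc.le⟩, by simp⟩
  have hTne : T.Nonempty := ⟨t, htT⟩
  have hTbdd : BddAbove T := ⟨c, fun u hu => hu.1.2.2⟩
  have hmge : t ≤ sSup T := le_csSup hTbdd htT
  have hmle : sSup T ≤ c := csSup_le hTne (fun u hu => hu.1.2.2)
  have hmcl : sSup T ∈ closure T := csSup_mem_closure hTne hTbdd
  have hTE : T ⊆ E := fun u hu => hu.1.1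
  have hmE : sSup T ∈ E := by
    have : closure T ⊆ E := by rw [← hE.closure_eq]; exact closure_mono hTE
    exact this hmcl
  by_cases hmT : sSup T ∈ T
  · rcases eq_or_lt_of_le hmle with h | hmc
    · rw [← h]; exact hmT.2
    · exfalso
      obtain ⟨w, hwE, hmw, hwc, hole⟩ := exists_next' hE hmE hc hmc (hgap _ ⟨hmge, hmc⟩)
      have hiw := hi _ hmE w hwE hmw hole
      have hwT : w ∈ T := ⟨⟨hwE, hmge.trans hmw.le, hwc⟩, by linarith [hmT.2]⟩
      exact absurd (le_csSup hTbdd hwT) (not_le.mpr hmw)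
  · have hTsub : T ⊆ E ∩ Iio (sSup T) := fun u hu =>
      ⟨hu.1.1, lt_of_le_of_ne (le_csSup hTbdd hu) (fun h => hmT (h ▸ hu))⟩
    have hne : (𝓝[T] (sSup T)).NeBot := mem_closure_iff_nhdsWithin_neBot.mp hmcl
    have hmc : sSup T = c := by
      by_contra hne2
      have hmc' : sSup T < c := lt_of_le_of_ne hmle hne2
      exact hgap _ ⟨hmge, hmc'⟩
        (accPt_of_neBot' (fun u hu => (hTsub hu).1) hmT hne)
    have hfT : Tendsto f (𝓝[T] (sSup T)) (𝓝 (f (sSup T))) := by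
      refine ((hmc ▸ hfl c hc).mono_left (nhdsWithin_mono _ ?_))
      intro u hu; exact ⟨(hTsub hu).1, hmc ▸ (hTsub hu).2⟩
    have hgT : Tendsto g (𝓝[T] (sSup T)) (𝓝 (g (sSup T))) :=
      (hgc _ hmE).tendsto.mono_left (nhdsWithin_mono _ hTE)
    have hle : g (sSup T) - g t ≤ f (sSup T) - f t := by
      refine le_of_tendsto_of_tendsto (hgT.sub_const (g t)) (hfT.sub_const (f t)) ?_
      exact eventually_mem_nhdsWithin.mono (fun u hu => hu.2)
    rw [← hmc]; exact hle
lemma keyeps (E : Set ℝ) (hEcl : IsClosed E)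
    (L : Set ℝ) (hL : L = {x : ℝ | AccPt x (Filter.principal E)})
    (f g : ℝ → ℝ)
    (hf : LowerSemicontinuousOn f E)
    (hfl : ∀ t ∈ E, Tendsto f (nhdsWithin t (E ∩ Iio t)) (nhds (f t)))
    (hgc : ContinuousOn g E) (hgm : StrictMonoOn g E)
    (hi : ∀ p ∈ E, ∀ q ∈ E, p < q → Ioo p q ∩ E = ∅ → g q - g p ≤ f q - f p)
    (hii : ∀ t ∈ L, (nhdsWithin t (L ∩ Iio t)).NeBot →
      1 ≤ Filter.limsup (fun s => (f t - f s) / (g t - g s)) (nhdsWithin t (L ∩ Iio t)))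
    {s₁ s₂ : ℝ} (hs₁ : s₁ ∈ E) (hs₂ : s₂ ∈ E) (hlt : s₁ < s₂)
    {ε : ℝ} (hε0 : 0 < ε) (hε1 : ε < 1) :
    (1 - ε) * (g s₂ - g s₁) ≤ f s₂ - f s₁ := by
  have h1ε : (0:ℝ) < 1 - ε := by linarith
  set T : Set ℝ := {u | (u ∈ E ∧ s₁ ≤ u ∧ u ≤ s₂) ∧ (1 - ε) * (g s₂ - g u) ≤ f s₂ - f u}
    with hTdef
  have hs₂T : s₂ ∈ T := ⟨⟨hs₂, hlt.le, le_refl _⟩, by simp⟩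
  have hTne : T.Nonempty := ⟨s₂, hs₂T⟩
  have hTbdd : BddBelow T := ⟨s₁, fun u hu => hu.1.2.1⟩
  set c := sInf T with hcdef
  have hcge : s₁ ≤ c := le_csInf hTne (fun u hu => hu.1.2.1)
  have hcle : c ≤ s₂ := csInf_le hTbdd hs₂T
  have hccl : c ∈ closure T := csInf_mem_closure hTne hTbdd
  have hTE : T ⊆ E := fun u hu => hu.1.1
  have hcE : c ∈ E := by
    have : closure T ⊆ E := by rw [← hEcl.closure_eq]; exact closure_mono hTE
    exact this hccl
  -- Step 1 : c ∈ T
  have hcT : c ∈ T := by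
    by_contra hcT
    have hne : (𝓝[T] c).NeBot := mem_closure_iff_nhdsWithin_neBot.mp hccl
    have hclt : f s₂ - f c < (1 - ε) * (g s₂ - g c) := by
      by_contra h; push_neg at h; exact hcT ⟨⟨hcE, hcge, hcle⟩, h⟩
    set y := f s₂ - (1 - ε) * (g s₂ - g c) with hydef
    have hyc : y < f c := by rw [hydef]; linarith
    set δ := (f c - y) / (2 * (1 - ε)) with hδdef
    have hδ : 0 < δ := div_pos (by linarith) (by linarith)
    have hδeq : (1 - ε) * δ = (f c - y) / 2 := by
      rw [hδdef]; field_simp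
    have hyδ : y + (1 - ε) * δ < f c := by rw [hδeq]; linarith
    have hfev : ∀ᶠ u in 𝓝[E] c, y + (1 - ε) * δ < f u := hf c hcE _ hyδ
    have hgev : ∀ᶠ u in 𝓝[E] c, |g u - g c| < δ := by
      have hgt : Tendsto g (𝓝[E] c) (𝓝 (g c)) := (hgc c hcE).tendsto
      have := Metric.tendsto_nhds.mp hgt δ hδ
      simpa [Real.dist_eq] using this
    have hev : ∀ᶠ u in 𝓝[T] c, u ∈ T ∧ (y + (1 - ε) * δ < f u ∧ |g u - g c| < δ) :=
      eventually_mem_nhdsWithin.and ((hfev.and hgev).filter_mono (nhdsWithin_mono _ hTE))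
    obtain ⟨u, huT, hfu, hgu⟩ := hev.exists
    have h1 : (1 - ε) * (g s₂ - g u) ≤ f s₂ - f u := huT.2
    have h2 : g u - g c < δ := (abs_lt.mp hgu).2
    have h3 : (1 - ε) * (g u - g c) < (1 - ε) * δ :=
      mul_lt_mul_of_pos_left h2 h1ε
    have h5 : (1 - ε) * (g s₂ - g u) = (1 - ε) * (g s₂ - g c) - (1 - ε) * (g u - g c) := by ring
    have : f u ≤ y + (1 - ε) * δ := by rw [hydef]; linarith
    linarith
  -- Step 2 : c = s₁
  rcases eq_or_lt_of_le hcge with h | hs₁c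
  · rw [h]; exact hcT.2
  exfalso
  have hDne : (E ∩ Ico s₁ c).Nonempty := ⟨s₁, hs₁, le_refl _, hs₁c⟩
  have hDbdd : BddAbove (E ∩ Ico s₁ c) := ⟨c, fun u hu => hu.2.2.le⟩
  set d := sSup (E ∩ Ico s₁ c) with hddef
  have hdcl : d ∈ closure (E ∩ Ico s₁ c) := csSup_mem_closure hDne hDbdd
  have hdE : d ∈ E := (hEcl.closure_subset_iff.mpr inter_subset_left) hdcl
  have hdge : s₁ ≤ d := le_csSup hDbdd ⟨hs₁, le_refl _, hs₁c⟩
  have hdle : d ≤ c := csSup_le hDne fun u hu => hu.2.2.le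
  rcases eq_or_lt_of_le hdle with hdc | hdc
  · -- d = c : c is a left accumulation point of E
    have hdnT : d ∉ E ∩ Ico s₁ c := fun h => absurd h.2.2 (by rw [hdc]; exact lt_irrefl c)
    have hneD : (𝓝[E ∩ Ico s₁ c] c).NeBot := by
      have hdcl' := hdcl
      rw [hdc] at hdcl'
      exact mem_closure_iff_nhdsWithin_neBot.mp hdcl'
    have hneE : (𝓝[E ∩ Iio c] c).NeBot :=
      hneD.mono (nhdsWithin_mono _ (fun u hu => ⟨hu.1, hu.2.2⟩))
    have hcL : c ∈ L := by
      rw [hL]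
      exact accPt_of_neBot' (s := E ∩ Iio c) inter_subset_left (fun h => lt_irrefl c h.2) hneE
    by_cases hLacc : (𝓝[L ∩ Iio c] c).NeBot
    · -- use hypothesis (ii)
      have hls := hii c hcL hLacc
      have hfreq : ∃ᶠ s in 𝓝[L ∩ Iio c] c, 1 - ε < (f c - f s) / (g c - g s) := by
        by_contra hcon2
        rw [not_frequently] at hcon2
        have hev2 : ∀ᶠ s in 𝓝[L ∩ Iio c] c, (f c - f s) / (g c - g s) ≤ 1 - ε :=
          hcon2.mono (fun s hs => not_lt.mp hs)
        have hub : limsup (fun s => (f c - f s) / (g c - g s)) (𝓝[L ∩ Iio c] c) ≤ 1 - ε := by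
          rw [limsup_eq]
          by_cases hbb : BddBelow {a | ∀ᶠ s in 𝓝[L ∩ Iio c] c, (f c - f s) / (g c - g s) ≤ a}
          · exact csInf_le hbb hev2
          · rw [Real.sInf_of_not_bddBelow hbb]; linarith
        linarith
      have hev3 : ∀ᶠ s in 𝓝[L ∩ Iio c] c, s₁ < s :=
        (eventually_gt_nhds hs₁c).filter_mono nhdsWithin_le_nhds
      obtain ⟨s, hqs, hs₁s, hsmem⟩ :=
        (hfreq.and_eventually (hev3.and eventually_mem_nhdsWithin)).exists
      have hsL : s ∈ L := hsmem.1
      have hsE : s ∈ E := by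
        rw [hL] at hsL
        have hcp : ClusterPt s (𝓟 E) := hsL.clusterPt
        rw [← hEcl.closure_eq]
        exact mem_closure_iff_clusterPt.mpr hcp
      have hsc : s < c := hsmem.2
      have hgsc : 0 < g c - g s := sub_pos.mpr (hgm hsE hcE hsc)
      have hfs : (1 - ε) * (g c - g s) < f c - f s := (lt_div_iff₀ hgsc).mp hqs
      have hsT : s ∈ T := by
        refine ⟨⟨hsE, hs₁s.le, hsc.le.trans hcle⟩, ?_⟩
        have h4 := hcT.2
        nlinarith
      exact absurd (csInf_le hTbdd hsT) (not_le.mpr hsc)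
    · -- no left accumulation of L at c : chain of holes
      rw [not_neBot, nhdsWithin, inf_principal_eq_bot] at hLacc
      obtain ⟨η, hη, hball⟩ := Metric.mem_nhds_iff.mp hLacc
      set η' := min η (c - s₁) with hη'def
      have hη'0 : 0 < η' := lt_min hη (by linarith)
      have hex : ∃ u, u ∈ E ∩ Iio c ∧ c - η' < u := by
        have : ∀ᶠ u in 𝓝[E ∩ Iio c] c, c - η' < u :=
          (eventually_gt_nhds (by linarith)).filter_mono nhdsWithin_le_nhds
        exact (eventually_mem_nhdsWithin.and this).exists
      obtain ⟨t, ⟨htE, htc⟩, htη⟩ := hex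
      have hgap : ∀ x ∈ Ico t c, ¬ AccPt x (𝓟 E) := by
        intro x hx hax
        have hxL : x ∈ L := by rw [hL]; exact hax
        have hxball : x ∈ Metric.ball c η := by
          rw [Metric.mem_ball, Real.dist_eq, abs_of_neg (by linarith [hx.2] : x - c < 0)]
          have : c - η' < x := lt_of_lt_of_le htη hx.1
          have : η' ≤ η := min_le_left _ _
          linarith [lt_of_lt_of_le htη hx.1, min_le_left η (c - s₁)]
        exact hball hxball ⟨hxL, hx.2⟩
      have hch := chain' hEcl hfl hgc hi htE hcE htc hgap
      have hgtc : 0 < g c - g t := sub_pos.mpr (hgm htE hcE htc)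
      have htT : t ∈ T := by
        refine ⟨⟨htE, ?_, htc.le.trans hcle⟩, ?_⟩
        · have : η' ≤ c - s₁ := min_le_right _ _
          linarith
        · have h4 := hcT.2
          nlinarith
      exact absurd (csInf_le hTbdd htT) (not_le.mpr htc)
  · -- d < c : a hole of E
    have hole : Ioo d c ∩ E = ∅ := by
      rw [eq_empty_iff_forall_notMem]
      rintro u ⟨⟨hdu, huc⟩, huE⟩
      have : u ∈ E ∩ Ico s₁ c := ⟨huE, hdge.trans hdu.le, huc⟩
      exact absurd (le_csSup hDbdd this) (not_le.mpr hdu)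
    have hid := hi d hdE c hcE hdc hole
    have hgdc : 0 < g c - g d := sub_pos.mpr (hgm hdE hcE hdc)
    have hdT : d ∈ T := by
      refine ⟨⟨hdE, hdge, hdle.trans hcle⟩, ?_⟩
      have h4 := hcT.2
      nlinarith
    exact absurd (csInf_le hTbdd hdT) (not_le.mpr hdc)


/-- elementary lemma on compact sets E ⊂ ℝ: if f is lsc and
left-continuous on E, g continuous and strictly increasing on E, the difference
quotient of f over g is ≥ 1 across every hole of E and (in the limsup sense)
at every left accumulation point of the limit points of E, then f − g is
nondecreasing on E. -/
theorem stmt9 (E : Set ℝ) (hEc : IsCompact E) (hEne : E.Nonempty) (hE : sInf E < sSup E)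
    (L : Set ℝ) (hL : L = {x : ℝ | AccPt x (Filter.principal E)})
    (f g : ℝ → ℝ)
    (hf : LowerSemicontinuousOn f E)
    (hfl : ∀ t ∈ E, Tendsto f (nhdsWithin t (E ∩ Iio t)) (nhds (f t)))
    (hgc : ContinuousOn g E) (hgm : StrictMonoOn g E)
    (hi : ∀ p ∈ E, ∀ q ∈ E, p < q → Ioo p q ∩ E = ∅ → g q - g p ≤ f q - f p)
    (hii : ∀ t ∈ L, (nhdsWithin t (L ∩ Iio t)).NeBot →
      1 ≤ Filter.limsup (fun s => (f t - f s) / (g t - g s)) (nhdsWithin t (L ∩ Iio t))) :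
    (∀ s₁ ∈ E, ∀ s₂ ∈ E, s₁ ≤ s₂ → f s₁ - g s₁ ≤ f s₂ - g s₂) ∧
    g (sSup E) - g (sInf E) ≤ f (sSup E) - f (sInf E) := by
  have hEcl : IsClosed E := hEc.isClosed
  have key : ∀ s₁ ∈ E, ∀ s₂ ∈ E, s₁ < s₂ → g s₂ - g s₁ ≤ f s₂ - f s₁ := by
    intro s₁ hs₁ s₂ hs₂ hlt
    have keyε : ∀ ε : ℝ, 0 < ε → ε < 1 → (1 - ε) * (g s₂ - g s₁) ≤ f s₂ - f s₁ :=
      fun ε hε0 hε1 => keyeps E hEcl L hL f g hf hfl hgc hgm hi hii hs₁ hs₂ hlt hε0 hε1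
    by_contra hcon
    push_neg at hcon
    have hG : 0 < g s₂ - g s₁ := sub_pos.mpr (hgm hs₁ hs₂ hlt)
    set G := g s₂ - g s₁ with hGdef
    set F := f s₂ - f s₁ with hFdef
    set ε := min (1/2) ((G - F) / (2 * G)) with hεdef
    have hε0 : 0 < ε := lt_min (by norm_num) (div_pos (by linarith) (by linarith))
    have hε1 : ε < 1 := lt_of_le_of_lt (min_le_left _ _) (by norm_num)
    have hle := keyε ε hε0 hε1
    have hεle : ε ≤ (G - F) / (2 * G) := min_le_right _ _
    have hεG : ε * G ≤ (G - F) / 2 := by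
      have h6 := (le_div_iff₀ (by linarith : (0:ℝ) < 2 * G)).mp hεle
      nlinarith
    nlinarith
  refine ⟨?_, ?_⟩
  · intro s₁ hs₁ s₂ hs₂ hle
    rcases eq_or_lt_of_le hle with rfl | hlt
    · exact le_refl _
    · linarith [key s₁ hs₁ s₂ hs₂ hlt]
  · exact key (sInf E) (hEc.sInf_mem hEne) (sSup E) (hEc.sSup_mem hEne) hE
end

section
/- Let (ℰ, Ψ, δ) be a one-dimensional rate-independent system with ℰ(t,u) = W(u) − ℓ(t)u, Ψ(v) = α₊v⁺ + α₋v⁻, and D(u,v) = Ψ(v−u) + δ(u,v). Then a point u ∈ ℝ satisfies the global stability condition ℰ(t,u) ≤ ℰ(t,v) + D(u,v) for all v ∈ ℝ if and only if W'_{sl,δ}(u) − α₋ ≤ ℓ(t) ≤ W'_{ir,δ}(u) + α₊. -/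
open Filter Set

/-- one-dimensional characterization of D-stability:
ℰ(t,u) ≤ ℰ(t,v) + D(u,v) for all v  ⟺  W'_{sl,δ}(u) − α₋ ≤ ℓ(t) ≤ W'_{ir,δ}(u) + α₊. -/
theorem stmt10 (W W' : ℝ → ℝ) (hW : ∀ u, HasDerivAt W (W' u) u)
    (αp αm : ℝ) (hαp : 0 < αp) (hαm : 0 < αm)
    (δ : ℝ × ℝ → ℝ) (hδc : Continuous δ) (hδ0 : ∀ p, 0 ≤ δ p)
    (hδlim : ∀ u, Tendsto (fun v => δ (u, v) / |v - u|) (nhdsWithin u {u}ᶜ) (nhds 0))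
    (l u : ℝ) :
    (∀ v : ℝ, W u - l * u ≤ W v - l * v
        + (αp * max (v - u) 0 + αm * max (u - v) 0) + δ (u, v)) ↔
    ((⨆ z ∈ Iio u, (((W z - W u + δ (u, z)) / (z - u) : ℝ) : EReal)) ≤ ((l + αm : ℝ) : EReal) ∧
     ((l - αp : ℝ) : EReal) ≤ ⨅ z ∈ Ioi u, (((W z - W u + δ (u, z)) / (z - u) : ℝ) : EReal)) := by
  constructor
  · intro h
    constructor
    · rw [iSup₂_le_iff]
      intro z hz
      rw [EReal.coe_le_coe_iff]
      have hz' : z - u < 0 := by simpa using (mem_Iio.mp hz)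
      rw [div_le_iff_of_neg hz']
      have h1 := h z
      have hmax1 : max (z - u) 0 = 0 := max_eq_right hz'.le
      have hmax2 : max (u - z) 0 = u - z := max_eq_left (by linarith)
      rw [hmax1, hmax2] at h1
      nlinarith
    · rw [le_iInf₂_iff]
      intro z hz
      rw [EReal.coe_le_coe_iff]
      have hz' : 0 < z - u := by simpa using (mem_Ioi.mp hz)
      rw [le_div_iff₀ hz']
      have h1 := h z
      have hmax1 : max (z - u) 0 = z - u := max_eq_left hz'.le
      have hmax2 : max (u - z) 0 = 0 := max_eq_right (by linarith)
      rw [hmax1, hmax2] at h1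
      nlinarith
  · rintro ⟨h1, h2⟩ v
    rcases lt_trichotomy v u with hv | hv | hv
    · have hle : (((W v - W u + δ (u, v)) / (v - u) : ℝ) : EReal) ≤ ((l + αm : ℝ) : EReal) :=
        le_trans (le_iSup₂ (f := fun z (_ : z ∈ Iio u) =>
          (((W z - W u + δ (u, z)) / (z - u) : ℝ) : EReal)) v (mem_Iio.mpr hv)) h1
      rw [EReal.coe_le_coe_iff] at hle
      have hv' : v - u < 0 := by linarith
      rw [div_le_iff_of_neg hv'] at hle
      have hmax1 : max (v - u) 0 = 0 := max_eq_right hv'.le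
      have hmax2 : max (u - v) 0 = u - v := max_eq_left (by linarith)
      rw [hmax1, hmax2]
      nlinarith
    · subst hv
      have := hδ0 (v, v)
      simp only [sub_self, max_self]
      nlinarith
    · have hle : ((l - αp : ℝ) : EReal) ≤ (((W v - W u + δ (u, v)) / (v - u) : ℝ) : EReal) :=
        le_trans h2 (iInf₂_le (f := fun z (_ : z ∈ Ioi u) =>
          (((W z - W u + δ (u, z)) / (z - u) : ℝ) : EReal)) v (mem_Ioi.mpr hv))
      rw [EReal.coe_le_coe_iff] at hle
      have hv' : 0 < v - u := by linarith
      rw [le_div_iff₀ hv'] at hle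
      have hmax1 : max (v - u) 0 = v - u := max_eq_left hv'.le
      have hmax2 : max (u - v) 0 = 0 := max_eq_right (by linarith)
      rw [hmax1, hmax2]
      nlinarith
end

section
/- Let ℰ(t,u) = W(u) − ℓ(t)u with W ∈ C¹(ℝ) coercive (W'(x) → ±∞ as x → ±∞), D(u,v) = Ψ(v−u) + δ(u,v) with Ψ(v) = α₊v⁺ + α₋v⁻ and δ admissible satisfying the strict reverse triangle inequality δ(u₀,u₁) > δ(u₀,v) + δ(v,u₁) for u₀ < v < u₁. If z ∈ M(t,u) := argmin_{v∈ℝ}{ℰ(t,v) + D(u,v)} and u < v < z, then W'_{ir,δ}(v) ≤ (W(z) − W(v) + δ(v,z))/(z−v) < ℓ(t) − α₊. -/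
open Filter Set

/-- if z minimizes v ↦ ℰ(t,v) + D(u,v) and u < v < z, then
W'_{ir,δ}(v) ≤ (W(z) − W(v) + δ(v,z))/(z−v) < ℓ(t) − α₊. -/
theorem stmt11 (W W' : ℝ → ℝ) (hW : ∀ u, HasDerivAt W (W' u) u)
    (hWbot : Tendsto W' atBot atBot) (hWtop : Tendsto W' atTop atTop)
    (αp αm : ℝ) (hαp : 0 < αp) (hαm : 0 < αm)
    (δ : ℝ × ℝ → ℝ) (hδc : Continuous δ) (hδ0 : ∀ p, 0 ≤ δ p)
    (hδlim : ∀ u, Tendsto (fun v => δ (u, v) / |v - u|) (nhdsWithin u {u}ᶜ) (nhds 0))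
    (hδtri : ∀ u₀ v u₁ : ℝ, u₀ < v → v < u₁ → δ (u₀, v) + δ (v, u₁) < δ (u₀, u₁))
    (l u z : ℝ)
    (hz : ∀ w : ℝ, W z - l * z + (αp * max (z - u) 0 + αm * max (u - z) 0) + δ (u, z)
        ≤ W w - l * w + (αp * max (w - u) 0 + αm * max (u - w) 0) + δ (u, w)) :
    ∀ v : ℝ, u < v → v < z →
      (⨅ w ∈ Ioi v, (((W w - W v + δ (v, w)) / (w - v) : ℝ) : EReal))
          ≤ (((W z - W v + δ (v, z)) / (z - v) : ℝ) : EReal) ∧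
      (W z - W v + δ (v, z)) / (z - v) < l - αp := by
  intro v huv hvz
  refine ⟨iInf₂_le z (mem_Ioi.mpr hvz), ?_⟩
  have hzv : (0:ℝ) < z - v := by linarith
  rw [div_lt_iff₀ hzv]
  have h1 := hz v
  have h2 := hδtri u v z huv hvz
  have hzu : max (z - u) 0 = z - u := max_eq_left (by linarith)
  have hvu : max (v - u) 0 = v - u := max_eq_left (by linarith)
  have huz : max (u - z) 0 = 0 := max_eq_right (by linarith)
  have huv' : max (u - v) 0 = 0 := max_eq_right (by linarith)
  rw [hzu, hvu, huz, huv'] at h1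
  nlinarith
end

section
/- Suppose u ∈ ℝ is D-stable at time t, i.e. ℰ(t,u) ≤ ℰ(t,v) + Ψ(v−u) + δ(u,v) for all v, where ℰ(t,u) = W(u) − ℓ(t)u and Ψ(v) = α₊v⁺ + α₋v⁻. If z ∈ argmin_v{ℰ(t,v) + Ψ(v−u) + δ(u,v)} with z > u, then W'_{ir,δ}(u) = (W(z) − W(u) + δ(u,z))/(z−u) = ℓ(t) − α₊. -/
open Filter Set

/-- if u is D-stable at time t and z > u minimizes
v ↦ ℰ(t,v) + D(u,v), then W'_{ir,δ}(u) = (W(z) − W(u) + δ(u,z))/(z−u) = ℓ(t) − α₊. -/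
theorem stmt13 (W W' : ℝ → ℝ) (hW : ∀ u, HasDerivAt W (W' u) u)
    (hWbot : Tendsto W' atBot atBot) (hWtop : Tendsto W' atTop atTop)
    (αp αm : ℝ) (hαp : 0 < αp) (hαm : 0 < αm)
    (δ : ℝ × ℝ → ℝ) (hδc : Continuous δ) (hδ0 : ∀ p, 0 ≤ δ p)
    (hδlim : ∀ u, Tendsto (fun v => δ (u, v) / |v - u|) (nhdsWithin u {u}ᶜ) (nhds 0))
    (hδtri : ∀ u₀ v u₁ : ℝ, u₀ < v → v < u₁ → δ (u₀, v) + δ (v, u₁) < δ (u₀, u₁))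
    (l u z : ℝ)
    (hstable : ∀ v : ℝ, W u - l * u ≤ W v - l * v
        + (αp * max (v - u) 0 + αm * max (u - v) 0) + δ (u, v))
    (hz : ∀ w : ℝ, W z - l * z + (αp * max (z - u) 0 + αm * max (u - z) 0) + δ (u, z)
        ≤ W w - l * w + (αp * max (w - u) 0 + αm * max (u - w) 0) + δ (u, w))
    (hzu : u < z) :
    (⨅ w ∈ Ioi u, (((W w - W u + δ (u, w)) / (w - u) : ℝ) : EReal))
        = (((W z - W u + δ (u, z)) / (z - u) : ℝ) : EReal) ∧
    (W z - W u + δ (u, z)) / (z - u) = l - αp := by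
  -- δ(u,u) = 0
  have hδuu : δ (u, u) = 0 := by
    have h1 : Tendsto (fun v => δ (u, v)) (nhdsWithin u {u}ᶜ) (nhds 0) := by
      have hmul : Tendsto (fun v => δ (u, v) / |v - u| * |v - u|)
          (nhdsWithin u {u}ᶜ) (nhds 0) := by
        have h2 : Tendsto (fun v : ℝ => |v - u|) (nhdsWithin u {u}ᶜ) (nhds 0) := by
          have h3 : Tendsto (fun v : ℝ => |v - u|) (nhds u) (nhds 0) := by
            simpa [Function.comp_def] using (continuous_abs.comp (continuous_sub_right u)).tendsto u
          exact h3.mono_left nhdsWithin_le_nhds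
        simpa using (hδlim u).mul h2
      refine hmul.congr' ?_
      filter_upwards [self_mem_nhdsWithin] with v hv
      have : v - u ≠ 0 := sub_ne_zero.mpr hv
      field_simp
    have h2 : Tendsto (fun v => δ (u, v)) (nhdsWithin u {u}ᶜ) (nhds (δ (u, u))) :=
      ((hδc.comp (continuous_const.prodMk continuous_id)).tendsto u).mono_left
        nhdsWithin_le_nhds
    exact tendsto_nhds_unique h2 h1
  have hzu' : (0:ℝ) < z - u := sub_pos.mpr hzu
  -- lower bound for all w > u
  have key1 : ∀ w, u < w → l - αp ≤ (W w - W u + δ (u, w)) / (w - u) := by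
    intro w hw
    have hs := hstable w
    have hmax1 : max (w - u) 0 = w - u := max_eq_left (by linarith)
    have hmax2 : max (u - w) 0 = 0 := max_eq_right (by linarith)
    rw [hmax1, hmax2] at hs
    rw [le_div_iff₀ (by linarith)]
    nlinarith
  -- upper bound at z
  have key2 : (W z - W u + δ (u, z)) / (z - u) ≤ l - αp := by
    have hs := hz u
    have hmax1 : max (z - u) 0 = z - u := max_eq_left (by linarith)
    have hmax2 : max (u - z) 0 = 0 := max_eq_right (by linarith)
    rw [hmax1, hmax2, hδuu] at hs
    simp only [sub_self, max_self, mul_zero, add_zero] at hs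
    rw [div_le_iff₀ hzu']
    nlinarith
  have hqz : (W z - W u + δ (u, z)) / (z - u) = l - αp :=
    le_antisymm key2 (key1 z hzu)
  refine ⟨?_, hqz⟩
  apply le_antisymm
  · exact iInf₂_le z hzu
  · refine le_iInf₂ fun w hw => ?_
    rw [EReal.coe_le_coe_iff, hqz]
    exact key1 w hw
end

section
/- Let z ∈ M(t,u) := argmin_v{W(v) − ℓ(t)v + α₊(v−u)⁺ + α₋(v−u)⁻ + δ(u,v)} with z > u, where δ satisfies the strict reverse triangle inequality δ(u₀,u₁) > δ(u₀,v) + δ(v,u₁) for u₀ < v < u₁. Then every v ∈ (u, z) fails the global stability condition: there exists w ∈ ℝ with W(v) − ℓ(t)v > W(w) − ℓ(t)w + α₊(w−v)⁺ + α₋(w−v)⁻ + δ(v,w). -/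
open Filter Set

/-- if z > u minimizes v ↦ W(v) − ℓ(t)v + Ψ(v−u) + δ(u,v), then every
v ∈ (u,z) fails the global stability condition. -/
theorem stmt14 (W W' : ℝ → ℝ) (hW : ∀ u, HasDerivAt W (W' u) u)
    (hWbot : Tendsto W' atBot atBot) (hWtop : Tendsto W' atTop atTop)
    (αp αm : ℝ) (hαp : 0 < αp) (hαm : 0 < αm)
    (δ : ℝ × ℝ → ℝ) (hδc : Continuous δ) (hδ0 : ∀ p, 0 ≤ δ p)
    (hδlim : ∀ u, Tendsto (fun v => δ (u, v) / |v - u|) (nhdsWithin u {u}ᶜ) (nhds 0))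
    (hδtri : ∀ u₀ v u₁ : ℝ, u₀ < v → v < u₁ → δ (u₀, v) + δ (v, u₁) < δ (u₀, u₁))
    (l u z : ℝ) (hzu : u < z)
    (hz : ∀ w : ℝ, W z - l * z + (αp * max (z - u) 0 + αm * max (u - z) 0) + δ (u, z)
        ≤ W w - l * w + (αp * max (w - u) 0 + αm * max (u - w) 0) + δ (u, w)) :
    ∀ v : ℝ, u < v → v < z →
      ∃ w : ℝ, W w - l * w + (αp * max (w - v) 0 + αm * max (v - w) 0) + δ (v, w)
        < W v - l * v := by
  intro v huv hvz
  refine ⟨z, ?_⟩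
  have h := hz v
  have ht := hδtri u v z huv hvz
  rw [max_eq_left (by linarith), max_eq_right (by linarith)] at h ⊢
  rw [max_eq_left (by linarith : (0:ℝ) ≤ v - u), max_eq_right (by linarith : u - v ≤ 0)] at h
  nlinarith [hαp, ht]
end
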